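/- Prefix-doubling correctness: let T be a string of length n with distinct suffixes, and for h ≥ 1 let rank_h[i] denote the number of positions j such that the length-h prefix of suffix j is lexicographically smaller than the length-h prefix of suffix i. If rank_h is injective on [0, n), then sorting positions by rank_h yields the suffix array of T, i.e., rank_h[i] < rank_h[j] iff suffix i < suffix j lexicographically. -/

import Mathlib

/-- The `h`-rank of suffix `i`: the number of positions `j` whose length-`h`
prefix of suffix `j` is lexicographically smaller than that of suffix `i`. -/
def hRank {α : Type*} [LinearOrder α] (n h : ℕ) (T : Fin n → α) (i : Fin n) : ℕ :=
  (Finset.univ.filter (fun j : Fin n =>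
    List.Lex (· < ·) (((List.ofFn T).drop j).take h) (((List.ofFn T).drop i).take h))).card

private lemma lex_of_take_lex {α : Type*} [LinearOrder α] :
    ∀ (h : ℕ) (l m : List α), List.Lex (· < ·) (l.take h) (m.take h) →
      List.Lex (· < ·) l m := by
  intro h
  induction h with
  | zero => intro l m hl; simp at hl
  | succ h ih =>
    intro l m hl
    match l, m with
    | [], [] => simp at hl
    | [], b :: m => exact List.Lex.nil
    | a :: l, [] => simp at hl
    | a :: l, b :: m =>
      simp only [List.take_succ_cons] at hl
      cases hl with
      | cons hl => exact List.Lex.cons (ih l m hl)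
      | rel hr => exact List.Lex.rel hr

private lemma take_lex_of_lex {α : Type*} [LinearOrder α] :
    ∀ (h : ℕ) (l m : List α), List.Lex (· < ·) l m →
      l.take h = m.take h ∨ List.Lex (· < ·) (l.take h) (m.take h) := by
  intro h
  induction h with
  | zero => intro l m _; simp
  | succ h ih =>
    intro l m hl
    cases hl with
    | nil =>
      simp only [List.take_nil, List.take_succ_cons]
      exact Or.inr List.Lex.nil
    | @cons a l m hl =>
      simp only [List.take_succ_cons]
      rcases ih l m hl with heq | hlt
      · exact Or.inl (by rw [heq])
      · exact Or.inr (List.Lex.cons hlt)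
    | rel hr =>
      simp only [List.take_succ_cons]
      exact Or.inr (List.Lex.rel hr)

/-- Prefix-doubling correctness: if the suffixes of `T` are pairwise distinct and
`hRank` is injective, then sorting positions by `hRank` yields the suffix array:
`hRank i < hRank j` iff suffix `i` is lexicographically smaller than suffix `j`. -/
theorem prefix_doubling_correct {α : Type*} [LinearOrder α] (n h : ℕ) (hh : 1 ≤ h)
    (T : Fin n → α)
    (hdist : ∀ i j : Fin n, i ≠ j → (List.ofFn T).drop i ≠ (List.ofFn T).drop j)
    (hinj : Function.Injective (hRank n h T)) :
    ∀ i j : Fin n, hRank n h T i < hRank n h T j ↔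
      List.Lex (· < ·) ((List.ofFn T).drop i) ((List.ofFn T).drop j) := by
  set R : List α → List α → Prop := List.Lex (· < ·) with hR
  have Rtrans : ∀ {a b c : List α}, R a b → R b c → R a c := fun hab hbc =>
    List.lex_trans lt_trans hab hbc
  have Rirrefl : ∀ a : List α, ¬ R a a := fun a => irrefl_of R a
  have Rtri : ∀ a b : List α, R a b ∨ a = b ∨ R b a := fun a b =>
    trichotomous_of R a b
  set P : Fin n → List α := fun i => ((List.ofFn T).drop i).take h with hP
  have Pinj : Function.Injective P := by
    intro i j hij
    apply hinj
    unfold hRank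
    congr 1
    apply Finset.filter_congr
    intro k _
    have hij' : List.take h (List.drop (↑i) (List.ofFn T))
        = List.take h (List.drop (↑j) (List.ofFn T)) := hij
    rw [hij']
  have mono : ∀ i j : Fin n, R (P i) (P j) → hRank n h T i < hRank n h T j := by
    intro i j hij
    apply Finset.card_lt_card
    constructor
    · intro k hk
      simp only [Finset.mem_filter, Finset.mem_univ, true_and] at *
      exact Rtrans hk hij
    · intro hsub
      have hi : i ∈ Finset.univ.filter (fun k : Fin n =>
          List.Lex (· < ·) (((List.ofFn T).drop k).take h) (((List.ofFn T).drop j).take h)) := by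
        simp only [Finset.mem_filter, Finset.mem_univ, true_and]
        exact hij
      have := hsub hi
      simp only [Finset.mem_filter, Finset.mem_univ, true_and] at this
      exact Rirrefl (P i) this
  have key : ∀ i j : Fin n, R (P i) (P j) ↔
      R ((List.ofFn T).drop i) ((List.ofFn T).drop j) := by
    intro i j
    constructor
    · exact lex_of_take_lex h _ _
    · intro hl
      rcases take_lex_of_lex h _ _ hl with heq | hlt
      · exfalso
        have : i = j := Pinj heq
        subst this
        exact Rirrefl _ hl
      · exact hlt
  intro i j
  rw [← key i j]
  constructor
  · intro hr
    rcases Rtri (P i) (P j) with hlt | heq | hgt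
    · exact hlt
    · exact absurd (Pinj heq ▸ hr) (lt_irrefl _)
    · exact absurd (lt_trans hr (mono _ _ hgt)) (lt_irrefl _)
  · exact mono i j
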